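/- For every real s > 1 and every x ∈ (0, π), the Clausen function S_s(x) = ∑_{n=1}^{∞} sin(n x)/n^s is strictly positive: ∑_{n=1}^{∞} sin(n x)/n^s > 0. -/

import Mathlib

open MeasureTheory Set

lemma clausen_znorm (x t : ℝ) (ht : 0 < t) :
    ‖Complex.exp (-(t:ℂ) + x * Complex.I)‖ < 1 := by
  rw [Complex.norm_exp]
  simp only [Complex.add_re, Complex.neg_re, Complex.ofReal_re, Complex.mul_re,
    Complex.I_re, Complex.I_im, Complex.ofReal_im]
  simpa using Real.exp_lt_one_iff.mpr (by linarith : -t + (x * 0 - 0 * 1) < 0)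

lemma clausen_den_ne (x t : ℝ) (ht : 0 < t) :
    (1 : ℂ) - Complex.exp (-(t:ℂ) + x * Complex.I) ≠ 0 := by
  intro h
  have h1 : Complex.exp (-(t:ℂ) + x * Complex.I) = 1 := by linear_combination -h
  have := clausen_znorm x t ht
  rw [h1] at this; simp at this

lemma clausen_pt (x t : ℝ) (ht : 0 < t) :
    ∑' n : ℕ, Real.exp (-(((n:ℝ)+1) * t)) * Real.sin (((n:ℝ)+1) * x)
      = Real.exp (-t) * Real.sin x / Complex.normSq (1 - Complex.exp (-(t:ℂ) + x * Complex.I)) := by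
  set z : ℂ := Complex.exp (-(t:ℂ) + x * Complex.I) with hzdef
  have hznorm : ‖z‖ < 1 := clausen_znorm x t ht
  have hzne : (1 : ℂ) - z ≠ 0 := clausen_den_ne x t ht
  have hN : Complex.normSq (1 - z) ≠ 0 := by
    simpa [Complex.normSq_eq_zero] using hzne
  have him : ∀ n : ℕ, (z ^ (n+1)).im = Real.exp (-(((n:ℝ)+1) * t)) * Real.sin (((n:ℝ)+1) * x) := by
    intro n
    have h1 : z ^ (n+1) = Complex.exp (((n:ℂ)+1) * (-(t:ℂ) + x * Complex.I)) := by
      rw [hzdef, ← Complex.exp_nat_mul]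
      push_cast
      ring_nf
    rw [h1, Complex.exp_im]
    congr 1
    · congr 1
      simp [Complex.mul_re, Complex.add_re, Complex.add_im, Complex.mul_im]
    · congr 1
      simp [Complex.mul_im, Complex.add_re, Complex.add_im, Complex.mul_re]
  have hsumz : Summable (fun n : ℕ => z ^ (n+1)) := by
    have := (summable_geometric_of_norm_lt_one hznorm).mul_right z
    simpa [pow_succ] using this
  have htsumz : ∑' n : ℕ, z ^ (n+1) = (1 - z)⁻¹ * z := by
    simp_rw [pow_succ]
    rw [tsum_mul_right, tsum_geometric_of_norm_lt_one hznorm]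
  have hzim : z.im = Real.exp (-t) * Real.sin x := by
    rw [hzdef, Complex.exp_im]
    congr 1
    · congr 1
      simp [Complex.add_re, Complex.mul_re]
    · congr 1
      simp [Complex.add_im, Complex.mul_im]
  calc ∑' n : ℕ, Real.exp (-(((n:ℝ)+1) * t)) * Real.sin (((n:ℝ)+1) * x)
      = ∑' n : ℕ, (z ^ (n+1)).im := tsum_congr fun n => (him n).symm
    _ = (∑' n : ℕ, z ^ (n+1)).im := (Complex.imCLM.map_tsum hsumz).symm
    _ = ((1 - z)⁻¹ * z).im := by rw [htsumz]
    _ = z.im / Complex.normSq (1 - z) := by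
        rw [mul_comm, ← div_eq_mul_inv, Complex.div_im]
        simp only [Complex.sub_re, Complex.sub_im, Complex.one_re, Complex.one_im]
        field_simp
        ring
    _ = Real.exp (-t) * Real.sin x / Complex.normSq (1 - z) := by rw [hzim]

lemma clausen_int (s : ℝ) (hs : 1 < s) (c : ℝ) (hc : 0 < c) (A : ℝ) :
    IntegrableOn (fun t : ℝ => t ^ (s-1) * Real.exp (-(c * t)) * A) (Ioi 0) := by
  have h := integrableOn_rpow_mul_exp_neg_mul_rpow (s := s-1) (p := 1) (b := c)
    (by linarith) one_pos hc
  have h2 : IntegrableOn (fun t : ℝ => t ^ (s-1) * Real.exp (-(c * t))) (Ioi 0) := by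
    refine h.congr_fun (fun t ht => ?_) measurableSet_Ioi
    simp [Real.rpow_one]
  exact h2.mul_const A

lemma clausen_val (s : ℝ) (hs : 1 < s) (c : ℝ) (hc : 0 < c) (A : ℝ) :
    ∫ t in Ioi 0, t ^ (s-1) * Real.exp (-(c * t)) * A
      = A / c ^ s * Real.Gamma s := by
  rw [MeasureTheory.integral_mul_const A, Real.integral_rpow_mul_exp_neg_mul_Ioi (by linarith) hc,
    Real.div_rpow zero_le_one hc.le, Real.one_rpow]
  ring

-- elementary bound: t * e^{-t} ≤ 2 e^{-t/2} (1 - e^{-t}) for t > 0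
lemma clausen_elem (t : ℝ) (ht : 0 < t) :
    t * Real.exp (-t) ≤ 2 * Real.exp (-(2⁻¹ * t)) * (1 - Real.exp (-t)) := by
  set E := Real.exp (2⁻¹ * t) with hE
  have hEpos : 0 < E := Real.exp_pos _
  have hE1 : 1 + 2⁻¹ * t ≤ E := by
    have := Real.add_one_le_exp (2⁻¹ * t); linarith
  have hv : Real.exp (-(2⁻¹ * t)) = E⁻¹ := by rw [Real.exp_neg]
  have hvv : Real.exp (-t) = E⁻¹ * E⁻¹ := by
    rw [← hv, ← Real.exp_add]
    congr 1
    ring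
  rw [hv, hvv]
  have key : t * E ≤ 2 * E^2 - 2 := by
    nlinarith [mul_nonneg hEpos.le (by linarith : (0:ℝ) ≤ E - 1 - 2⁻¹ * t)]
  have hE3 : 0 < E^3 := by positivity
  rw [← sub_nonneg]
  have expand : 2 * E⁻¹ * (1 - E⁻¹ * E⁻¹) - t * (E⁻¹ * E⁻¹)
      = (2 * E^2 - 2 - t * E) / E^3 := by
    field_simp
  rw [expand]
  exact div_nonneg (by linarith) hE3.le

theorem stmt_12 (s : ℝ) (hs : 1 < s) (x : ℝ) (hx : x ∈ Set.Ioo 0 Real.pi) :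
    0 < ∑' n : ℕ, Real.sin ((n + 1) * x) / ((n : ℝ) + 1) ^ s := by
  obtain ⟨hx0, hxpi⟩ := hx
  have hsin : 0 < Real.sin x := Real.sin_pos_of_pos_of_lt_pi hx0 hxpi
  have hs0 : (0:ℝ) < s := lt_trans one_pos hs
  have hΓ : 0 < Real.Gamma s := Real.Gamma_pos_of_pos hs0
  set F : ℕ → ℝ → ℝ :=
    fun n t => t ^ (s-1) * Real.exp (-(((n:ℝ)+1) * t)) * Real.sin (((n:ℝ)+1) * x) with hF
  have hc : ∀ n : ℕ, (0:ℝ) < (n:ℝ)+1 := fun n => by positivity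
  have hint : ∀ n : ℕ, IntegrableOn (F n) (Ioi 0) := fun n => clausen_int s hs _ (hc n) _
  -- norms of F
  have hnorm_eq : ∀ n : ℕ, ∀ t ∈ Ioi (0:ℝ),
      ‖F n t‖ = t ^ (s-1) * Real.exp (-(((n:ℝ)+1) * t)) * |Real.sin (((n:ℝ)+1) * x)| := by
    intro n t ht
    rw [hF]
    simp only [Real.norm_eq_abs, abs_mul]
    rw [abs_of_nonneg (Real.rpow_nonneg (le_of_lt ht) _), abs_of_nonneg (Real.exp_nonneg _)]
  have hnormval : ∀ n : ℕ, ∫ t in Ioi 0, ‖F n t‖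
      = |Real.sin (((n:ℝ)+1) * x)| / ((n:ℝ)+1) ^ s * Real.Gamma s := by
    intro n
    rw [setIntegral_congr_fun measurableSet_Ioi (hnorm_eq n)]
    exact clausen_val s hs _ (hc n) _
  have hsumnorm : Summable (fun n : ℕ => ∫ t in Ioi 0, ‖F n t‖) := by
    have hbase : Summable (fun n : ℕ => 1 / ((n:ℝ)+1) ^ s * Real.Gamma s) := by
      apply Summable.mul_right
      have h0 : Summable (fun n : ℕ => 1 / (n:ℝ) ^ s) := Real.summable_one_div_nat_rpow.mpr hs
      have h1 := h0.comp_injective Nat.succ_injective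
      refine h1.congr fun n => ?_
      simp [Function.comp]
    refine hbase.of_nonneg_of_le (fun n => integral_nonneg fun t => norm_nonneg _) fun n => ?_
    rw [hnormval n]
    gcongr
    exact Real.abs_sin_le_one _
  -- interchange
  have hswap := integral_tsum_of_summable_integral_norm hint hsumnorm
  -- evaluate lhs of hswap
  have hval : ∀ n : ℕ, ∫ t in Ioi 0, F n t
      = Real.sin (((n:ℝ)+1) * x) / ((n:ℝ)+1) ^ s * Real.Gamma s :=
    fun n => clausen_val s hs _ (hc n) _
  have hl : ∑' n : ℕ, ∫ t in Ioi 0, F n t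
      = (∑' n : ℕ, Real.sin (((n:ℝ)+1) * x) / ((n:ℝ)+1) ^ s) * Real.Gamma s := by
    rw [← tsum_mul_right]
    exact tsum_congr hval
  -- closed form for the inner function
  set cf : ℝ → ℝ := fun t => t ^ (s-1) *
    (Real.exp (-t) * Real.sin x / Complex.normSq (1 - Complex.exp (-(t:ℂ) + x * Complex.I)))
    with hcf
  have hpt : ∀ t ∈ Ioi (0:ℝ), ∑' n : ℕ, F n t = cf t := by
    intro t ht
    simp only [hcf]
    rw [← clausen_pt x t ht, ← tsum_mul_left]
    exact tsum_congr fun n => by simp only [hF]; ring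
  have hir : ∫ t in Ioi 0, ∑' n : ℕ, F n t = ∫ t in Ioi 0, cf t :=
    setIntegral_congr_fun measurableSet_Ioi hpt
  -- continuity of cf on Ioi 0
  have hzcont : Continuous fun t : ℝ => Complex.exp (-(t:ℂ) + x * Complex.I) := by
    apply Complex.continuous_exp.comp
    fun_prop
  have hcfcont : ContinuousOn cf (Ioi 0) := by
    apply ContinuousOn.mul
    · exact continuousOn_id.rpow_const fun t ht => Or.inl (ne_of_gt ht)
    · apply ContinuousOn.div
      · exact (Continuous.mul (Real.continuous_exp.comp continuous_neg) continuous_const).continuousOn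
      · exact (Complex.continuous_normSq.comp (continuous_const.sub hzcont)).continuousOn
      · intro t ht
        simpa [Complex.normSq_eq_zero] using clausen_den_ne x t ht
  -- dominating bound
  have hbound : ∀ t ∈ Ioi (0:ℝ), ‖cf t‖ ≤ 2 * (t ^ (s-2) * Real.exp (-(2⁻¹ * t))) := by
    intro t ht
    have ht0 : (0:ℝ) < t := ht
    have hexp1 : Real.exp (-t) < 1 := Real.exp_lt_one_iff.mpr (by linarith)
    have hgeo : Summable (fun n : ℕ => Real.exp (-t) ^ (n+1)) := by
      have := (summable_geometric_of_lt_one (Real.exp_nonneg _) hexp1).mul_right (Real.exp (-t))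
      simpa [pow_succ] using this
    have hFle : ∀ n : ℕ, ‖F n t‖ ≤ t ^ (s-1) * Real.exp (-t) ^ (n+1) := by
      intro n
      rw [hnorm_eq n t ht]
      have he : Real.exp (-(((n:ℝ)+1) * t)) = Real.exp (-t) ^ (n+1) := by
        rw [← Real.exp_nat_mul]
        push_cast
        ring_nf
      rw [he]
      have h1 : |Real.sin (((n:ℝ)+1) * x)| ≤ 1 := Real.abs_sin_le_one _
      calc t ^ (s-1) * Real.exp (-t) ^ (n+1) * |Real.sin (((n:ℝ)+1) * x)|
          ≤ t ^ (s-1) * Real.exp (-t) ^ (n+1) * 1 := by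
            apply mul_le_mul_of_nonneg_left h1
            positivity
        _ = t ^ (s-1) * Real.exp (-t) ^ (n+1) := by ring
    have hsumF : Summable fun n : ℕ => ‖F n t‖ := by
      refine (hgeo.mul_left (t ^ (s-1))).of_nonneg_of_le (fun n => norm_nonneg _) hFle
    have h1 : ‖cf t‖ ≤ ∑' n : ℕ, ‖F n t‖ := by
      rw [← hpt t ht]
      exact norm_tsum_le_tsum_norm hsumF
    have h2 : ∑' n : ℕ, ‖F n t‖ ≤ ∑' n : ℕ, t ^ (s-1) * Real.exp (-t) ^ (n+1) :=
      Summable.tsum_le_tsum hFle hsumF (hgeo.mul_left _)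
    have h3 : ∑' n : ℕ, t ^ (s-1) * Real.exp (-t) ^ (n+1)
        = t ^ (s-1) * (Real.exp (-t) * (1 - Real.exp (-t))⁻¹) := by
      rw [tsum_mul_left]
      congr 1
      simp_rw [pow_succ]
      rw [tsum_mul_right, tsum_geometric_of_lt_one (Real.exp_nonneg _) hexp1]
      ring
    have h4 : t ^ (s-1) * (Real.exp (-t) * (1 - Real.exp (-t))⁻¹)
        ≤ 2 * (t ^ (s-2) * Real.exp (-(2⁻¹ * t))) := by
      have hts : t ^ (s-1) = t ^ (s-2) * t := by
        rw [← Real.rpow_add_one (ne_of_gt ht0) (s-2)]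
        congr 1
        ring
      rw [hts]
      have h1me : 0 < 1 - Real.exp (-t) := by linarith
      have key : t * (Real.exp (-t) * (1 - Real.exp (-t))⁻¹) ≤ 2 * Real.exp (-(2⁻¹ * t)) := by
        rw [← mul_assoc, ← div_eq_mul_inv, div_le_iff₀ h1me]
        linarith [clausen_elem t ht0]
      calc t ^ (s-2) * t * (Real.exp (-t) * (1 - Real.exp (-t))⁻¹)
          = t ^ (s-2) * (t * (Real.exp (-t) * (1 - Real.exp (-t))⁻¹)) := by ring
        _ ≤ t ^ (s-2) * (2 * Real.exp (-(2⁻¹ * t))) :=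
            mul_le_mul_of_nonneg_left key (Real.rpow_nonneg ht0.le _)
        _ = 2 * (t ^ (s-2) * Real.exp (-(2⁻¹ * t))) := by ring
    linarith [h1, h2.trans_eq h3, h4]
  -- integrability of cf
  have hDint : IntegrableOn (fun t : ℝ => 2 * (t ^ (s-2) * Real.exp (-(2⁻¹ * t)))) (Ioi 0) := by
    have h := integrableOn_rpow_mul_exp_neg_mul_rpow (s := s-2) (p := 1) (b := 2⁻¹)
      (by linarith) one_pos (by norm_num)
    have h2 : IntegrableOn (fun t : ℝ => t ^ (s-2) * Real.exp (-(2⁻¹ * t))) (Ioi 0) := by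
      refine h.congr_fun (fun t ht => ?_) measurableSet_Ioi
      simp [Real.rpow_one]
    exact h2.const_mul 2
  have hcfmeas : AEStronglyMeasurable cf (volume.restrict (Ioi 0)) :=
    hcfcont.aestronglyMeasurable measurableSet_Ioi
  have hcfint : IntegrableOn cf (Ioi 0) := by
    refine hDint.mono' hcfmeas ?_
    exact (ae_restrict_iff' measurableSet_Ioi).mpr (ae_of_all _ hbound)
  -- positivity of cf
  have hcfpos : ∀ t ∈ Ioi (0:ℝ), 0 < cf t := by
    intro t ht
    have hden : 0 < Complex.normSq (1 - Complex.exp (-(t:ℂ) + x * Complex.I)) :=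
      Complex.normSq_pos.mpr (clausen_den_ne x t ht)
    have htp : (0:ℝ) < t := ht
    have h1 : 0 < t ^ (s-1) := Real.rpow_pos_of_pos htp _
    have h2 : 0 < Real.exp (-t) := Real.exp_pos _
    simp only [hcf]
    positivity
  have hintpos : 0 < ∫ t in Ioi 0, cf t := by
    rw [setIntegral_pos_iff_support_of_nonneg_ae ?_ hcfint]
    · have hsub : Ioi (0:ℝ) ⊆ Function.support cf ∩ Ioi 0 :=
        fun t ht => ⟨ne_of_gt (hcfpos t ht), ht⟩
      calc (0:ENNReal) < volume (Ioi (0:ℝ)) := by simp [Real.volume_Ioi]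
        _ ≤ volume (Function.support cf ∩ Ioi 0) := measure_mono hsub
    · exact (ae_restrict_iff' measurableSet_Ioi).mpr (ae_of_all _ fun t ht => (hcfpos t ht).le)
  have hchain : 0 < (∑' n : ℕ, Real.sin (((n:ℝ)+1) * x) / ((n:ℝ)+1) ^ s) * Real.Gamma s := by
    rw [← hl, hswap, hir]
    exact hintpos
  rcases mul_pos_iff.mp hchain with ⟨h, _⟩ | ⟨_, h⟩
  · exact h
  · linarith
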